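/- Let p > c > 0 and α > 0, and let π(q,v) = p·min{q,v} − cq. For any probability distribution G on ℝ₊, sup over functions χ with ‖χ‖_∞ ≤ 1 of [ inf_{v≥0}(π(q,v) + αχ(v)) − α·E_G[χ(ṽ)] ] equals E_G[min{pq, 2α, pṽ}] − cq. -/

import Mathlib

open MeasureTheory

/-- TV-dual reduction: the supremum over functions ‖χ‖_∞ ≤ 1 of
inf_{v≥0}(π(q,v) + αχ(v)) − α·E_G[χ] equals E_G[min{pq, 2α, pṽ}] − cq. -/
theorem stmt_18 (p c α q : ℝ) (hc : 0 < c) (hcp : c < p) (hα : 0 < α) (hq : 0 ≤ q)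
    (G : Measure ℝ) [IsProbabilityMeasure G] (hsupp : G (Set.Iio 0) = 0) :
    sSup {y : ℝ | ∃ χ : ℝ → ℝ, Measurable χ ∧ (∀ v : ℝ, |χ v| ≤ 1) ∧
        y = sInf {z : ℝ | ∃ v : ℝ, 0 ≤ v ∧ z = p * min q v - c * q + α * χ v}
            - α * ∫ v, χ v ∂G}
      = (∫ v, min (min (p * q) (2 * α)) (p * v) ∂G) - c * q := by
  have hp : 0 < p := hc.trans hcp
  set m : ℝ → ℝ := fun v => min (min (p * q) (2 * α)) (p * v) with hm
  have hae : ∀ᵐ v ∂G, 0 ≤ v := by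
    rw [ae_iff]
    convert hsupp using 2
    ext v
    simp [not_le]
  -- integrability of m
  have hmmeas : Measurable m :=
    measurable_const.min (measurable_const_mul p)
  have hmint : Integrable m G := by
    apply (integrable_const (p * q)).mono' hmmeas.aestronglyMeasurable
    filter_upwards [hae] with v hv
    rw [Real.norm_eq_abs, abs_le]
    constructor
    · have h1 : 0 ≤ p * v := mul_nonneg hp.le hv
      have h2 : 0 ≤ p * q := mul_nonneg hp.le hq
      have : 0 ≤ m v := le_min (le_min h2 (by linarith)) h1
      linarith [mul_nonneg hp.le hq]
    · exact le_trans (min_le_left _ _) (min_le_left _ _)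
  -- generic upper bound
  have hub : ∀ y ∈ {y : ℝ | ∃ χ : ℝ → ℝ, Measurable χ ∧ (∀ v : ℝ, |χ v| ≤ 1) ∧
        y = sInf {z : ℝ | ∃ v : ℝ, 0 ≤ v ∧ z = p * min q v - c * q + α * χ v}
            - α * ∫ v, χ v ∂G},
      y ≤ (∫ v, m v ∂G) - c * q := by
    rintro y ⟨χ, hχm, hχb, rfl⟩
    set Z := {z : ℝ | ∃ v : ℝ, 0 ≤ v ∧ z = p * min q v - c * q + α * χ v} with hZ
    have hχint : Integrable χ G := by
      apply (integrable_const (1 : ℝ)).mono' hχm.aestronglyMeasurable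
      filter_upwards with v
      simpa [Real.norm_eq_abs] using hχb v
    have hbdd : BddBelow Z := by
      refine ⟨-(c * q) - α, ?_⟩
      rintro z ⟨v, hv, rfl⟩
      have h1 : 0 ≤ p * min q v := mul_nonneg hp.le (le_min_iff.mpr ⟨hq, hv⟩)
      have h2 : -1 ≤ χ v := (abs_le.mp (hχb v)).1
      nlinarith
    have hI0 : sInf Z ≤ -(c * q) + α * χ 0 := by
      apply csInf_le hbdd
      exact ⟨0, le_rfl, by rw [min_eq_right hq]; ring⟩
    -- pointwise bound a.e.
    have hpt : ∀ᵐ v ∂G, sInf Z - α * χ v ≤ m v - c * q := by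
      filter_upwards [hae] with v hv
      have h1 : sInf Z ≤ p * min q v - c * q + α * χ v :=
        csInf_le hbdd ⟨v, hv, rfl⟩
      have h2 : -1 ≤ χ v := (abs_le.mp (hχb v)).1
      have h3 : χ 0 ≤ 1 := (abs_le.mp (hχb 0)).2
      have hminq : p * min q v ≤ p * q := mul_le_mul_of_nonneg_left (min_le_left _ _) hp.le
      have hminv : p * min q v ≤ p * v := mul_le_mul_of_nonneg_left (min_le_right _ _) hp.le
      have hle1 : sInf Z - α * χ v ≤ p * q - c * q := by linarith
      have hle2 : sInf Z - α * χ v ≤ 2 * α - c * q := by nlinarith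
      have hle3 : sInf Z - α * χ v ≤ p * v - c * q := by linarith
      show sInf Z - α * χ v ≤ min (min (p * q) (2 * α)) (p * v) - c * q
      rw [← min_sub_sub_right, ← min_sub_sub_right]
      exact le_min (le_min hle1 hle2) hle3
    have hconst : Integrable (fun _ : ℝ => sInf Z) G := integrable_const _
    have hleft : Integrable (fun v => sInf Z - α * χ v) G := hconst.sub (hχint.const_mul α)
    have hright : Integrable (fun v => m v - c * q) G := hmint.sub (integrable_const _)
    calc sInf Z - α * ∫ v, χ v ∂G = ∫ v, (sInf Z - α * χ v) ∂G := by
          rw [integral_sub hconst (hχint.const_mul α), integral_const_mul, integral_const]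
          simp [measure_univ]
      _ ≤ ∫ v, (m v - c * q) ∂G := integral_mono_ae hleft hright hpt
      _ = (∫ v, m v ∂G) - c * q := by
          rw [integral_sub hmint (integrable_const _), integral_const]
          simp [measure_univ]
  -- the optimal dual function χ*
  set χs : ℝ → ℝ := fun v => 1 - min (min (p * q) (2 * α)) (p * max v 0) / α with hχs
  have hχsmeas : Measurable χs :=
    measurable_const.sub
      ((measurable_const.min ((measurable_id.max measurable_const).const_mul p)).div_const α)
  have hx0 : ∀ v : ℝ, 0 ≤ min (min (p * q) (2 * α)) (p * max v 0) := fun v =>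
    le_min (le_min (mul_nonneg hp.le hq) (by linarith))
      (mul_nonneg hp.le (le_max_right v 0))
  have hx2 : ∀ v : ℝ, min (min (p * q) (2 * α)) (p * max v 0) ≤ 2 * α := fun v =>
    (min_le_left _ _).trans (min_le_right _ _)
  have hχsb : ∀ v : ℝ, |χs v| ≤ 1 := by
    intro v
    rw [hχs, abs_le]
    have h1 : min (min (p * q) (2 * α)) (p * max v 0) / α ≤ 2 := by
      rw [div_le_iff₀ hα]; linarith [hx2 v]
    have h2 : 0 ≤ min (min (p * q) (2 * α)) (p * max v 0) / α := div_nonneg (hx0 v) hα.le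
    constructor <;> simp only [] <;> linarith
  set Zs := {z : ℝ | ∃ v : ℝ, 0 ≤ v ∧ z = p * min q v - c * q + α * χs v} with hZs
  have hχs0 : χs 0 = 1 := by
    have h0 : min (min (p * q) (2 * α)) (p * max (0:ℝ) 0) = 0 := by
      rw [max_self, mul_zero]
      exact min_eq_right (le_min (mul_nonneg hp.le hq) (by linarith))
    rw [hχs]
    simp only [h0, zero_div, sub_zero]
  have hZsbdd : BddBelow Zs := by
    refine ⟨-(c * q) - α, ?_⟩
    rintro z ⟨v, hv, rfl⟩
    have h1 : 0 ≤ p * min q v := mul_nonneg hp.le (le_min_iff.mpr ⟨hq, hv⟩)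
    have h2 : -1 ≤ χs v := (abs_le.mp (hχsb v)).1
    nlinarith
  have hmem0 : α - c * q ∈ Zs := ⟨0, le_rfl, by rw [min_eq_right hq, hχs0]; ring⟩
  have hsinf : sInf Zs = α - c * q := by
    refine le_antisymm (csInf_le hZsbdd hmem0) (le_csInf ⟨_, hmem0⟩ ?_)
    rintro z ⟨v, hv, rfl⟩
    have hmax : max v 0 = v := max_eq_left hv
    have hx : min (min (p * q) (2 * α)) (p * max v 0) ≤ p * min q v := by
      rw [hmax]
      rcases le_total q v with h | h
      · rw [min_eq_left h]
        exact (min_le_left _ _).trans (min_le_left _ _)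
      · rw [min_eq_right h]
        exact min_le_right _ _
    have heq : α * χs v = α - min (min (p * q) (2 * α)) (p * max v 0) := by
      rw [hχs]
      field_simp
    rw [heq]
    linarith
  have hxmeas : Measurable (fun v : ℝ => min (min (p * q) (2 * α)) (p * max v 0)) :=
    measurable_const.min ((measurable_id.max measurable_const).const_mul p)
  have hxint : Integrable (fun v : ℝ => min (min (p * q) (2 * α)) (p * max v 0)) G := by
    apply (integrable_const (2 * α)).mono' hxmeas.aestronglyMeasurable
    filter_upwards with v
    rw [Real.norm_eq_abs, abs_le]
    exact ⟨by linarith [hx0 v], hx2 v⟩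
  have hxeq : ∫ v, min (min (p * q) (2 * α)) (p * max v 0) ∂G = ∫ v, m v ∂G := by
    apply integral_congr_ae
    filter_upwards [hae] with v hv
    rw [hm, max_eq_left hv]
  have hint : ∫ v, χs v ∂G = 1 - (∫ v, m v ∂G) / α := by
    rw [hχs]
    rw [integral_sub (integrable_const 1) (hxint.div_const α), integral_div, hxeq,
      integral_const]
    simp [measure_univ]
  have hmem : (∫ v, m v ∂G) - c * q ∈ {y : ℝ | ∃ χ : ℝ → ℝ, Measurable χ ∧ (∀ v : ℝ, |χ v| ≤ 1) ∧
        y = sInf {z : ℝ | ∃ v : ℝ, 0 ≤ v ∧ z = p * min q v - c * q + α * χ v}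
            - α * ∫ v, χ v ∂G} := by
    refine ⟨χs, hχsmeas, hχsb, ?_⟩
    rw [show {z : ℝ | ∃ v : ℝ, 0 ≤ v ∧ z = p * min q v - c * q + α * χs v} = Zs from rfl,
      hsinf, hint]
    field_simp
    ring
  exact le_antisymm (csSup_le ⟨_, hmem⟩ hub) (le_csSup ⟨_, hub⟩ hmem)
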